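/- Let n ≥ 1 and let x ∈ ℝ^n be fixed. Then the maximum softmax probability τ ↦ max_{j} exp(x_j/τ) / ∑_{i=1}^n exp(x_i/τ) is a nonincreasing function of the temperature τ on (0, ∞): if 0 < τ₁ ≤ τ₂ then max_j softmax(x/τ₁)_j ≥ max_j softmax(x/τ₂)_j. -/
import Mathlib


/-- The maximum softmax probability is a nonincreasing function of the temperature:
if `0 < τ₁ ≤ τ₂`, then `max_j softmax(x/τ₁)_j ≥ max_j softmax(x/τ₂)_j`. -/
theorem max_softmax_antitone_in_temperature (n : ℕ) (hn : 1 ≤ n) (x : Fin n → ℝ)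
    (τ₁ τ₂ : ℝ) (hτ₁ : 0 < τ₁) (hτ : τ₁ ≤ τ₂) :
    (⨆ j : Fin n, Real.exp (x j / τ₂) / ∑ i : Fin n, Real.exp (x i / τ₂)) ≤
      ⨆ j : Fin n, Real.exp (x j / τ₁) / ∑ i : Fin n, Real.exp (x i / τ₁) := by
  have hτ₂ : (0:ℝ) < τ₂ := lt_of_lt_of_le hτ₁ hτ
  haveI : Nonempty (Fin n) := ⟨⟨0, hn⟩⟩
  obtain ⟨j₀, hj₀⟩ := Finite.exists_max x
  have hS : ∀ τ : ℝ, (0:ℝ) < ∑ i : Fin n, Real.exp (x i / τ) := fun τ =>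
    Finset.sum_pos (fun i _ => Real.exp_pos _) Finset.univ_nonempty
  -- the sup equals the value at j₀
  have key : ∀ τ : ℝ, 0 < τ →
      (⨆ j : Fin n, Real.exp (x j / τ) / ∑ i : Fin n, Real.exp (x i / τ)) =
      Real.exp (x j₀ / τ) / ∑ i : Fin n, Real.exp (x i / τ) := by
    intro τ hτ'
    apply le_antisymm
    · apply ciSup_le
      intro j
      gcongr
      exact hj₀ j
    · exact le_ciSup (f := fun j => Real.exp (x j / τ) / ∑ i : Fin n, Real.exp (x i / τ))
        (Set.Finite.bddAbove (Set.finite_range _)) j₀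
  rw [key τ₁ hτ₁, key τ₂ hτ₂]
  -- rewrite sums
  have hsum : ∀ τ : ℝ, 0 < τ → (∑ i : Fin n, Real.exp (x i / τ)) =
      Real.exp (x j₀ / τ) * ∑ i : Fin n, Real.exp ((x i - x j₀) / τ) := by
    intro τ hτ'
    rw [Finset.mul_sum]
    apply Finset.sum_congr rfl
    intro i _
    rw [← Real.exp_add, sub_div]
    ring_nf
  rw [hsum τ₁ hτ₁, hsum τ₂ hτ₂]
  have hE₁ : (0:ℝ) < Real.exp (x j₀ / τ₁) := Real.exp_pos _
  have hE₂ : (0:ℝ) < Real.exp (x j₀ / τ₂) := Real.exp_pos _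
  have hT : ∀ τ : ℝ, 0 < τ → (0:ℝ) < ∑ i : Fin n, Real.exp ((x i - x j₀) / τ) :=
    fun τ _ => Finset.sum_pos (fun i _ => Real.exp_pos _) Finset.univ_nonempty
  rw [div_mul_eq_div_div, div_self (ne_of_gt hE₂), div_mul_eq_div_div,
    div_self (ne_of_gt hE₁)]
  apply one_div_le_one_div_of_le (hT τ₁ hτ₁)
  apply Finset.sum_le_sum
  intro i _
  apply Real.exp_le_exp.2
  have hnp : x i - x j₀ ≤ 0 := sub_nonpos.2 (hj₀ i)
  rw [div_eq_mul_inv, div_eq_mul_inv]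
  exact mul_le_mul_of_nonpos_left (by
    exact inv_anti₀ hτ₁ hτ) hnp
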